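/- Let G be a connected graph on n ≥ 3 vertices with CD(G) = n − 1. Then G is isomorphic to one of: the complete graph K_n; the star K_{1,n−1}; the complete bipartite graph K_{2,n−2}; the graph S_n obtained by joining an edge K_2 completely to an independent set of n − 2 vertices; the tree T_n obtained from P_3 by attaching n − 3 leaves to one end; or the graph U_n obtained from K_3 by attaching n − 3 leaves to one of its vertices. -/

import Mathlib

open SimpleGraph

/-- A set `B` is a centroidal locating set of `G` if every pair of distinct vertices is
distinguished by the relative distances to two vertices of `B`. -/
def CentroidalLocating {V : Type*} (G : SimpleGraph V) (B : Set V) : Prop :=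
  ∀ ⦃x y : V⦄, x ≠ y → ∃ b1 ∈ B, ∃ b2 ∈ B,
    (G.dist x b1 ≤ G.dist x b2 ∧ G.dist y b2 < G.dist y b1) ∨
    (G.dist y b1 ≤ G.dist y b2 ∧ G.dist x b2 < G.dist x b1)

/-- The centroidal dimension: minimum size of a centroidal locating set. -/
noncomputable def CD {V : Type*} (G : SimpleGraph V) : ℕ :=
  sInf {k | ∃ B : Set V, B.ncard = k ∧ CentroidalLocating G B}

/-- The star `K_{1,n-1}`: vertex 0 adjacent to all others. -/
def starGraph (n : ℕ) : SimpleGraph (Fin n) :=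
  SimpleGraph.fromRel (fun x _ => x.val = 0)

/-- The complete bipartite graph `K_{2,n-2}` with parts {0,1} and the rest. -/
def compBipGraph (n : ℕ) : SimpleGraph (Fin n) :=
  SimpleGraph.fromRel (fun x y => x.val < 2 ∧ ¬ y.val < 2)

/-- The graph `S_n`: the edge {0,1} joined completely to an independent set of n-2 vertices. -/
def sGraph (n : ℕ) : SimpleGraph (Fin n) :=
  SimpleGraph.fromRel (fun x _ => x.val < 2)

/-- The tree `T_n`: path 2-1-0 with n-3 extra leaves attached to vertex 0. -/
def tGraph (n : ℕ) : SimpleGraph (Fin n) :=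
  SimpleGraph.fromRel (fun x y => (x.val = 0 ∧ y.val ≠ 2) ∨ (x.val = 1 ∧ y.val = 2))

/-- The graph `U_n`: a triangle on {0,1,2} with n-3 leaves attached to vertex 0. -/
def uGraph (n : ℕ) : SimpleGraph (Fin n) :=
  SimpleGraph.fromRel (fun x y => x.val = 0 ∨ (x.val = 1 ∧ y.val = 2))

namespace ExtremalAux

variable {V : Type*}

lemma dist_one_of_adj {G : SimpleGraph V} {u v : V} (h : G.Adj u v) : G.dist u v = 1 := by
  have h1 : G.dist u v ≤ 1 := by
    simpa using SimpleGraph.dist_le (SimpleGraph.Walk.cons h SimpleGraph.Walk.nil)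
  have h0 : 0 < G.dist u v := h.reachable.pos_dist_of_ne h.ne
  omega

lemma adj_of_dist_one {G : SimpleGraph V} {u v : V} (h : G.dist u v = 1) : G.Adj u v := by
  obtain ⟨p, hp⟩ := SimpleGraph.exists_walk_of_dist_ne_zero (by omega : G.dist u v ≠ 0)
  exact p.adj_of_length_eq_one (hp.trans h)

lemma mem_of_walk {G : SimpleGraph V} {s : Set V}
    (hcl : ∀ a ∈ s, ∀ b, G.Adj a b → b ∈ s) :
    ∀ {x y : V} (_ : G.Walk x y), x ∈ s → y ∈ s := by
  intro x y w
  induction w with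
  | nil => exact id
  | cons h _ ih => exact fun hx => ih (hcl _ hx _ h)

lemma closed_eq_univ {G : SimpleGraph V} (hG : G.Connected) {s : Set V}
    {a : V} (ha : a ∈ s) (hcl : ∀ a ∈ s, ∀ b, G.Adj a b → b ∈ s) : ∀ v, v ∈ s := by
  intro v
  obtain ⟨w⟩ := hG.preconnected a v
  exact mem_of_walk hcl w ha

lemma not_CL {G : SimpleGraph V} [Fintype V] {n : ℕ} (hn : 3 ≤ n)
    (hcard : Fintype.card V = n) (hCD : CD G = n - 1) {u v : V} (huv : u ≠ v) :
    ¬ CentroidalLocating G (({u, v} : Set V)ᶜ) := by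
  intro hB
  have hnc : (({u, v} : Set V)ᶜ).ncard = n - 2 := by
    have h2 := Set.ncard_add_ncard_compl ({u, v} : Set V) (Set.toFinite _) (Set.toFinite _)
    rw [Set.ncard_pair huv, Nat.card_eq_fintype_card, hcard] at h2
    omega
  have hle : CD G ≤ n - 2 := Nat.sInf_le ⟨_, hnc, hB⟩
  rw [hCD] at hle
  omega

lemma exists_undist {G : SimpleGraph V} {B : Set V} (h : ¬ CentroidalLocating G B) :
    ∃ x y, x ≠ y ∧ ∀ b1 ∈ B, ∀ b2 ∈ B,
      (G.dist x b1 ≤ G.dist x b2 → G.dist y b1 ≤ G.dist y b2) ∧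
      (G.dist y b1 ≤ G.dist y b2 → G.dist x b1 ≤ G.dist x b2) := by
  unfold CentroidalLocating at h
  push_neg at h
  obtain ⟨x, y, hxy, hb⟩ := h
  refine ⟨x, y, hxy, fun b1 h1 b2 h2 => ?_⟩
  have h3 := hb b1 h1 b2 h2
  exact h3

lemma star_prop {G : SimpleGraph V} (hG : G.Connected)
    {u v : V} (huv : u ≠ v)
    (hbad : ¬ CentroidalLocating G (({u, v} : Set V)ᶜ))
    {a1 a2 b1 b2 : V}
    (ha1 : G.Adj u a1) (ha2 : G.Adj u a2) (ha12 : a1 ≠ a2) (ha1v : a1 ≠ v) (ha2v : a2 ≠ v)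
    (hb1 : G.Adj v b1) (hb2 : G.Adj v b2) (hb12 : b1 ≠ b2) (hb1u : b1 ≠ u) (hb2u : b2 ≠ u) :
    ∀ x, x ≠ u → x ≠ v → (G.Adj u x ↔ G.Adj v x) := by
  obtain ⟨x, y, hxy, K⟩ := exists_undist hbad
  have hmem : ∀ b : V, b ≠ u → b ≠ v → b ∈ (({u, v} : Set V)ᶜ) := by
    intro b h1 h2
    simp [Set.mem_compl_iff, h1, h2]
  have dpos : ∀ {p q : V}, p ≠ q → 1 ≤ G.dist p q := fun h => hG.pos_dist_of_ne h
  have deq : ∀ {p q : V}, G.dist p q = 0 → p = q := fun h => (hG.dist_eq_zero_iff).mp h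
  have inner : ∀ p w : V, w ≠ u → w ≠ v → w ≠ p →
      (∀ c1 c2 : V, c1 ∈ (({u, v} : Set V)ᶜ) → c2 ∈ (({u, v} : Set V)ᶜ) →
        G.dist p c1 ≤ G.dist p c2 → G.dist w c1 ≤ G.dist w c2) →
      ∀ c1 c2 : V, G.Adj p c1 → G.Adj p c2 → c1 ≠ c2 →
        c1 ∈ (({u, v} : Set V)ᶜ) → c2 ∈ (({u, v} : Set V)ᶜ) → False := by
    intro p w hwu hwv hwp Kp c1 c2 hc1 hc2 hc12 hm1 hm2
    have hcw : ∃ c, G.Adj p c ∧ c ∈ (({u, v} : Set V)ᶜ) ∧ c ≠ w := by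
      by_cases h : c1 = w
      · refine ⟨c2, hc2, hm2, fun hh => hc12 ?_⟩
        rw [h, hh]
      · exact ⟨c1, hc1, hm1, h⟩
    obtain ⟨c, hpc, hcm, hcwne⟩ := hcw
    have h1 : G.dist p c ≤ G.dist p w := by
      rw [dist_one_of_adj hpc]
      exact dpos (Ne.symm hwp)
    have h2 := Kp c w hcm (hmem w hwu hwv) h1
    rw [SimpleGraph.dist_self] at h2
    exact hcwne (deq (Nat.le_zero.mp h2)).symm
  have hma1 : a1 ∈ (({u, v} : Set V)ᶜ) := hmem a1 ha1.ne' ha1v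
  have hma2 : a2 ∈ (({u, v} : Set V)ᶜ) := hmem a2 ha2.ne' ha2v
  have hmb1 : b1 ∈ (({u, v} : Set V)ᶜ) := hmem b1 hb1u hb1.ne'
  have hmb2 : b2 ∈ (({u, v} : Set V)ᶜ) := hmem b2 hb2u hb2.ne'
  have twins : (∀ c1 c2 : V, c1 ∈ (({u, v} : Set V)ᶜ) → c2 ∈ (({u, v} : Set V)ᶜ) →
        (G.dist u c1 ≤ G.dist u c2 → G.dist v c1 ≤ G.dist v c2) ∧
        (G.dist v c1 ≤ G.dist v c2 → G.dist u c1 ≤ G.dist u c2)) →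
      ∀ z, z ≠ u → z ≠ v → (G.Adj u z ↔ G.Adj v z) := by
    intro Kuv z hzu hzv
    have hmz : z ∈ (({u, v} : Set V)ᶜ) := hmem z hzu hzv
    constructor
    · intro hz
      have h1 : G.dist u z ≤ G.dist u b1 := by
        rw [dist_one_of_adj hz]; exact dpos (Ne.symm hb1u)
      have h2 := (Kuv z b1 hmz hmb1).1 h1
      rw [dist_one_of_adj hb1] at h2
      have h3 : 1 ≤ G.dist v z := dpos (Ne.symm hzv)
      exact adj_of_dist_one (le_antisymm h2 h3)
    · intro hz
      have h1 : G.dist v z ≤ G.dist v a1 := by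
        rw [dist_one_of_adj hz]; exact dpos (Ne.symm ha1v)
      have h2 := (Kuv z a1 hmz hma1).2 h1
      rw [dist_one_of_adj ha1] at h2
      have h3 : 1 ≤ G.dist u z := dpos (Ne.symm hzu)
      exact adj_of_dist_one (le_antisymm h2 h3)
  by_cases hxu : x = u
  · subst hxu
    by_cases hyv : y = v
    · subst hyv
      exact twins (fun c1 c2 h1 h2 => K c1 h1 c2 h2)
    · exact (inner x y (Ne.symm hxy) hyv (Ne.symm hxy)
        (fun c1 c2 h1 h2 hle => (K c1 h1 c2 h2).1 hle) a1 a2 ha1 ha2 ha12 hma1 hma2).elim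
  · by_cases hxv : x = v
    · subst hxv
      by_cases hyu : y = u
      · subst hyu
        exact twins (fun c1 c2 h1 h2 => ⟨(K c1 h1 c2 h2).2, (K c1 h1 c2 h2).1⟩)
      · exact (inner x y hyu (Ne.symm hxy) (Ne.symm hxy)
          (fun c1 c2 h1 h2 hle => (K c1 h1 c2 h2).1 hle) b1 b2 hb1 hb2 hb12 hmb1 hmb2).elim
    · by_cases hyu : y = u
      · subst hyu
        exact (inner y x hxu hxv hxy
          (fun c1 c2 h1 h2 hle => (K c1 h1 c2 h2).2 hle) a1 a2 ha1 ha2 ha12 hma1 hma2).elim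
      · by_cases hyv : y = v
        · subst hyv
          exact (inner y x hxu hxv hxy
            (fun c1 c2 h1 h2 hle => (K c1 h1 c2 h2).2 hle) b1 b2 hb1 hb2 hb12 hmb1 hmb2).elim
        · exfalso
          have h1 := (K x (hmem x hxu hxv) y (hmem y hyu hyv)).1
          rw [SimpleGraph.dist_self] at h1
          have h2 := h1 (Nat.zero_le _)
          rw [SimpleGraph.dist_self] at h2
          exact hxy (deq (Nat.le_zero.mp h2)).symm

lemma equiv_three [Fintype V] {n : ℕ} (hn : 3 ≤ n) (hcard : Fintype.card V = n)
    {c u z : V} (hcu : c ≠ u) (hcz : c ≠ z) (huz : u ≠ z) :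
    ∃ e : V ≃ Fin n, e c = ⟨0, by omega⟩ ∧ e u = ⟨1, by omega⟩ ∧ e z = ⟨2, by omega⟩ := by
  classical
  have e0 : V ≃ Fin n := Fintype.equivFinOfCardEq hcard
  set p0 : Fin n := ⟨0, by omega⟩
  set p1 : Fin n := ⟨1, by omega⟩
  set p2 : Fin n := ⟨2, by omega⟩
  have h01 : p0 ≠ p1 := by simp [p0, p1, Fin.ext_iff]
  have h02 : p0 ≠ p2 := by simp [p0, p2, Fin.ext_iff]
  have h12 : p1 ≠ p2 := by simp [p1, p2, Fin.ext_iff]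
  set e1 : V ≃ Fin n := e0.trans (Equiv.swap (e0 c) p0) with he1
  have e1c : e1 c = p0 := by simp [e1, Equiv.swap_apply_left]
  set e2 : V ≃ Fin n := e1.trans (Equiv.swap (e1 u) p1) with he2
  have e2u : e2 u = p1 := by simp [e2, Equiv.swap_apply_left]
  have e2c : e2 c = p0 := by
    have h1 : p0 ≠ e1 u := by
      rw [← e1c]
      exact fun h => hcu (e1.injective h)
    simp only [e2, Equiv.trans_apply, e1c]
    rw [Equiv.swap_apply_of_ne_of_ne h1 h01]
  set e3 : V ≃ Fin n := e2.trans (Equiv.swap (e2 z) p2) with he3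
  have e3z : e3 z = p2 := by simp [e3, Equiv.swap_apply_left]
  have e3c : e3 c = p0 := by
    simp only [e3, Equiv.trans_apply, e2c]
    exact Equiv.swap_apply_of_ne_of_ne (fun h => hcz (e2.injective (e2c.trans h))) h02
  have e3u : e3 u = p1 := by
    simp only [e3, Equiv.trans_apply, e2u]
    exact Equiv.swap_apply_of_ne_of_ne (fun h => huz (e2.injective (e2u.trans h))) h12
  exact ⟨e3, e3c, e3u, e3z⟩

lemma exists_two_other [Fintype V] (h : 3 ≤ Fintype.card V) (c : V) :
    ∃ u z : V, u ≠ z ∧ c ≠ u ∧ c ≠ z := by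
  classical
  have hc : 2 ≤ ((Finset.univ : Finset V).erase c).card := by
    have := Finset.card_erase_of_mem (Finset.mem_univ c)
    rw [Finset.card_univ] at this
    omega
  obtain ⟨u, hu, z, hz, huz⟩ := Finset.one_lt_card.mp hc
  exact ⟨u, z, huz, fun h => (Finset.mem_erase.mp hu).1 h.symm,
    fun h => (Finset.mem_erase.mp hz).1 h.symm⟩

lemma exists_one_other [Fintype V] (h : 3 ≤ Fintype.card V) (a b : V) :
    ∃ z : V, z ≠ a ∧ z ≠ b := by
  classical
  have hc : 0 < ((Finset.univ : Finset V) \ {a, b}).card := by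
    have h2 : ({a, b} : Finset V).card ≤ 2 := Finset.card_insert_le _ _ |>.trans (by simp)
    have h3 := Finset.card_sdiff_of_subset (Finset.subset_univ ({a, b} : Finset V))
    rw [Finset.card_univ] at h3
    omega
  obtain ⟨z, hz⟩ := Finset.card_pos.mp hc
  simp only [Finset.mem_sdiff, Finset.mem_insert, Finset.mem_singleton] at hz
  exact ⟨z, fun h => hz.2 (Or.inl h), fun h => hz.2 (Or.inr h)⟩

lemma val_eq_iff [Fintype V] {n : ℕ} (e : V ≃ Fin n) {k : ℕ} {hk : k < n} {w : V}
    (hw : e w = ⟨k, hk⟩) (a : V) : (e a).val = k ↔ a = w := by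
  constructor
  · intro h
    apply e.injective
    rw [hw]
    exact Fin.ext h
  · intro h
    rw [h, hw]

lemma iso_top [Fintype V] {G : SimpleGraph V} {n : ℕ} (hcard : Fintype.card V = n)
    (h : ∀ a b : V, a ≠ b → G.Adj a b) : Nonempty (G ≃g (⊤ : SimpleGraph (Fin n))) := by
  have e := Fintype.equivFinOfCardEq hcard
  refine ⟨⟨e, fun {a b} => ?_⟩⟩
  simp only [top_adj, ne_eq, EmbeddingLike.apply_eq_iff_eq]
  exact ⟨fun hne => h a b hne, fun ha => ha.ne⟩

lemma iso_star [Fintype V] {G : SimpleGraph V} {n : ℕ} (hn : 3 ≤ n)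
    (hcard : Fintype.card V = n) {c : V}
    (h : ∀ a b : V, G.Adj a b ↔ a ≠ b ∧ (a = c ∨ b = c)) :
    Nonempty (G ≃g _root_.starGraph n) := by
  obtain ⟨u, z, huz, hcu, hcz⟩ := exists_two_other (hcard ▸ hn) c
  obtain ⟨e, hec, -, -⟩ := equiv_three hn hcard hcu hcz huz
  refine ⟨⟨e, fun {a b} => ?_⟩⟩
  rw [_root_.starGraph, SimpleGraph.fromRel_adj, h a b, ne_eq, EmbeddingLike.apply_eq_iff_eq,
    val_eq_iff e hec a, val_eq_iff e hec b]

lemma iso_s [Fintype V] {G : SimpleGraph V} {n : ℕ} (hn : 3 ≤ n)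
    (hcard : Fintype.card V = n) {p q : V} (hpq : p ≠ q)
    (h : ∀ a b : V, G.Adj a b ↔ a ≠ b ∧ (a = p ∨ a = q ∨ b = p ∨ b = q)) :
    Nonempty (G ≃g sGraph n) := by
  obtain ⟨z, hzp, hzq⟩ := exists_one_other (hcard ▸ hn) p q
  obtain ⟨e, hep, heq, -⟩ := equiv_three hn hcard hpq (Ne.symm hzp) (Ne.symm hzq)
  have hlt : ∀ a : V, (e a).val < 2 ↔ (a = p ∨ a = q) := by
    intro a
    constructor
    · intro hh
      have : (e a).val = 0 ∨ (e a).val = 1 := by omega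
      rcases this with hh' | hh'
      · exact Or.inl ((val_eq_iff e hep a).mp hh')
      · exact Or.inr ((val_eq_iff e heq a).mp hh')
    · rintro (rfl | rfl)
      · rw [hep]; exact Nat.zero_lt_two
      · rw [heq]; exact Nat.one_lt_two
  refine ⟨⟨e, fun {a b} => ?_⟩⟩
  rw [sGraph, SimpleGraph.fromRel_adj, h a b, ne_eq, EmbeddingLike.apply_eq_iff_eq,
    hlt a, hlt b]
  tauto

lemma iso_compBip [Fintype V] {G : SimpleGraph V} {n : ℕ} (hn : 3 ≤ n)
    (hcard : Fintype.card V = n) {p q : V} (hpq : p ≠ q)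
    (h : ∀ a b : V, G.Adj a b ↔
      (((a = p ∨ a = q) ∧ ¬(b = p ∨ b = q)) ∨ ((b = p ∨ b = q) ∧ ¬(a = p ∨ a = q)))) :
    Nonempty (G ≃g compBipGraph n) := by
  obtain ⟨z, hzp, hzq⟩ := exists_one_other (hcard ▸ hn) p q
  obtain ⟨e, hep, heq, -⟩ := equiv_three hn hcard hpq (Ne.symm hzp) (Ne.symm hzq)
  have hlt : ∀ a : V, (e a).val < 2 ↔ (a = p ∨ a = q) := by
    intro a
    constructor
    · intro hh
      have : (e a).val = 0 ∨ (e a).val = 1 := by omega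
      rcases this with hh' | hh'
      · exact Or.inl ((val_eq_iff e hep a).mp hh')
      · exact Or.inr ((val_eq_iff e heq a).mp hh')
    · rintro (rfl | rfl)
      · rw [hep]; exact Nat.zero_lt_two
      · rw [heq]; exact Nat.one_lt_two
  have hcross : ∀ x y : V, ((x = p ∨ x = q) ∧ ¬(y = p ∨ y = q)) → x ≠ y := by
    rintro x y ⟨h1, h2⟩ rfl
    exact h2 h1
  refine ⟨⟨e, fun {a b} => ?_⟩⟩
  rw [compBipGraph, SimpleGraph.fromRel_adj, h a b, ne_eq, EmbeddingLike.apply_eq_iff_eq,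
    hlt a, hlt b]
  constructor
  · rintro ⟨-, hh⟩
    tauto
  · intro hh
    refine ⟨?_, by tauto⟩
    rcases hh with hh | hh
    · exact hcross a b hh
    · exact (hcross b a hh).symm

lemma iso_t [Fintype V] {G : SimpleGraph V} {n : ℕ} (hn : 3 ≤ n)
    (hcard : Fintype.card V = n) {c u z : V} (hcu : c ≠ u) (hcz : c ≠ z) (huz : u ≠ z)
    (h : ∀ a b : V, G.Adj a b ↔ a ≠ b ∧
      ((a = c ∧ b ≠ z) ∨ (a = u ∧ b = z) ∨ (b = c ∧ a ≠ z) ∨ (b = u ∧ a = z))) :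
    Nonempty (G ≃g tGraph n) := by
  obtain ⟨e, hec, heu, hez⟩ := equiv_three hn hcard hcu hcz huz
  refine ⟨⟨e, fun {a b} => ?_⟩⟩
  rw [tGraph, SimpleGraph.fromRel_adj, h a b, ne_eq, EmbeddingLike.apply_eq_iff_eq]
  simp only [ne_eq, val_eq_iff e hec, val_eq_iff e heu, val_eq_iff e hez]
  tauto

lemma iso_u [Fintype V] {G : SimpleGraph V} {n : ℕ} (hn : 3 ≤ n)
    (hcard : Fintype.card V = n) {c u z : V} (hcu : c ≠ u) (hcz : c ≠ z) (huz : u ≠ z)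
    (h : ∀ a b : V, G.Adj a b ↔ a ≠ b ∧
      (a = c ∨ b = c ∨ (a = u ∧ b = z) ∨ (a = z ∧ b = u))) :
    Nonempty (G ≃g uGraph n) := by
  obtain ⟨e, hec, heu, hez⟩ := equiv_three hn hcard hcu hcz huz
  refine ⟨⟨e, fun {a b} => ?_⟩⟩
  rw [uGraph, SimpleGraph.fromRel_adj, h a b, ne_eq, EmbeddingLike.apply_eq_iff_eq]
  simp only [val_eq_iff e hec, val_eq_iff e heu, val_eq_iff e hez]
  tauto

lemma exists_adj {G : SimpleGraph V} [Fintype V] (hG : G.Connected)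
    (h : 2 ≤ Fintype.card V) (v : V) : ∃ w, G.Adj v w := by
  obtain ⟨u, hu⟩ := Fintype.exists_ne_of_one_lt_card (by omega) v
  obtain ⟨w⟩ := hG.preconnected v u
  cases w with
  | nil => exact absurd rfl hu
  | cons h p => exact ⟨_, h⟩

lemma pair_other [DecidableEq V] {s : Finset V} (h : s.card = 2) {a : V} (ha : a ∈ s) :
    ∃ b, b ≠ a ∧ s = {a, b} := by
  obtain ⟨x, y, hxy, hs⟩ := Finset.card_eq_two.mp h
  subst hs
  rcases Finset.mem_insert.mp ha with rfl | ha'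
  · exact ⟨y, fun hh => hxy hh.symm, rfl⟩
  · rw [Finset.mem_singleton] at ha'
    subst ha'
    exact ⟨x, fun hh => hxy hh, Finset.pair_comm x a⟩

lemma singleton_of_card_one [DecidableEq V] {s : Finset V} (h : s.card = 1) {a : V}
    (ha : a ∈ s) : s = {a} := by
  obtain ⟨x, hs⟩ := Finset.card_eq_one.mp h
  subst hs
  rw [Finset.mem_singleton] at ha
  rw [ha]

lemma three_le_of_mem [DecidableEq V] {s : Finset V} {p q b : V}
    (hp : p ∈ s) (hq : q ∈ s) (hb : b ∈ s) (hpq : p ≠ q) (hpb : p ≠ b) (hqb : q ≠ b) :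
    3 ≤ s.card := by
  have hsub : ({p, q, b} : Finset V) ⊆ s := by
    intro x hx
    simp only [Finset.mem_insert, Finset.mem_singleton] at hx
    rcases hx with rfl | rfl | rfl <;> assumption
  have hcard : ({p, q, b} : Finset V).card = 3 := by
    rw [Finset.card_insert_of_notMem (by simp [hpq, hpb]),
      Finset.card_insert_of_notMem (by simp [hqb]), Finset.card_singleton]
  rw [← hcard]
  exact Finset.card_le_card hsub

lemma leaf_leaf_absurd [Fintype V] {G : SimpleGraph V} [DecidableEq V] [DecidableRel G.Adj]
    (hG : G.Connected) {x s0 c : V} (hNx : G.neighborFinset x = {s0})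
    (hNs : G.neighborFinset s0 = {x}) (hcx : c ≠ x) (hcs : c ≠ s0) : False := by
  have hcl : ∀ a ∈ {y : V | y = x ∨ y = s0}, ∀ b, G.Adj a b →
      b ∈ {y : V | y = x ∨ y = s0} := by
    intro a ha b hab
    simp only [Set.mem_setOf_eq] at ha ⊢
    rcases ha with rfl | rfl
    · have hb : b ∈ G.neighborFinset a := (SimpleGraph.mem_neighborFinset _ _ _).mpr hab
      rw [hNx, Finset.mem_singleton] at hb
      exact Or.inr hb
    · have hb : b ∈ G.neighborFinset a := (SimpleGraph.mem_neighborFinset _ _ _).mpr hab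
      rw [hNs, Finset.mem_singleton] at hb
      exact Or.inl hb
  rcases closed_eq_univ hG (show x ∈ {y : V | y = x ∨ y = s0} from Or.inl rfl) hcl c with h | h
  · exact hcx h
  · exact hcs h

end ExtremalAux

open ExtremalAux

theorem extremal_characterization {V : Type*} [Fintype V] (G : SimpleGraph V)
    (hG : G.Connected) (n : ℕ) (hn : 3 ≤ n) (hcard : Fintype.card V = n)
    (hCD : CD G = n - 1) :
    Nonempty (G ≃g (⊤ : SimpleGraph (Fin n))) ∨
    Nonempty (G ≃g _root_.starGraph n) ∨
    Nonempty (G ≃g compBipGraph n) ∨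
    Nonempty (G ≃g sGraph n) ∨
    Nonempty (G ≃g tGraph n) ∨
    Nonempty (G ≃g uGraph n) := by
  classical
  have hbad : ∀ u v : V, u ≠ v → ¬ CentroidalLocating G (({u, v} : Set V)ᶜ) :=
    fun u v h => not_CL hn hcard hCD h
  -- the workhorse: the (∗) property
  have hst : ∀ u v : V, u ≠ v → 2 ≤ ((G.neighborFinset u).erase v).card →
      2 ≤ ((G.neighborFinset v).erase u).card →
      ∀ x, x ≠ u → x ≠ v → (G.Adj u x ↔ G.Adj v x) := by
    intro u v huv h1 h2
    obtain ⟨a1, ha1m, a2, ha2m, ha12⟩ := Finset.one_lt_card.mp h1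
    obtain ⟨b1, hb1m, b2, hb2m, hb12⟩ := Finset.one_lt_card.mp h2
    rw [Finset.mem_erase, SimpleGraph.mem_neighborFinset] at ha1m ha2m hb1m hb2m
    exact star_prop hG huv (hbad u v huv) ha1m.2 ha2m.2 ha12 ha1m.1 ha2m.1
      hb1m.2 hb2m.2 hb12 hb1m.1 hb2m.1
  -- erase-card providers
  have her3 : ∀ u v : V, 3 ≤ G.degree u → 2 ≤ ((G.neighborFinset u).erase v).card := by
    intro u v h
    have := Finset.pred_card_le_card_erase (s := G.neighborFinset u) (a := v)
    have hd : G.degree u = (G.neighborFinset u).card := rfl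
    omega
  have her2 : ∀ u v : V, G.degree u = 2 → ¬ G.Adj u v →
      2 ≤ ((G.neighborFinset u).erase v).card := by
    intro u v h hna
    rw [Finset.erase_eq_of_notMem (by rwa [SimpleGraph.mem_neighborFinset])]
    exact le_of_eq h.symm
  have hdeg1 : ∀ v : V, 1 ≤ G.degree v := by
    intro v
    obtain ⟨w, hw⟩ := exists_adj hG (by omega) v
    exact Finset.card_pos.mpr ⟨w, (SimpleGraph.mem_neighborFinset G v w).mpr hw⟩
  set D : Finset V := Finset.univ.filter (fun v => 3 ≤ G.degree v) with hDdef
  have hmemD : ∀ v : V, v ∈ D ↔ 3 ≤ G.degree v := by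
    intro v; simp [hDdef]
  by_cases h3 : 3 ≤ D.card
  · -- complete graph
    have htw : ∀ u v : V, u ∈ D → v ∈ D → u ≠ v →
        ∀ x, x ≠ u → x ≠ v → (G.Adj u x ↔ G.Adj v x) := by
      intro u v hu hv huv
      exact hst u v huv (her3 u v ((hmemD u).mp hu)) (her3 v u ((hmemD v).mp hv))
    have hall : ∀ z : V, z ∈ D := by
      obtain ⟨p, hp⟩ := Finset.card_pos.mp (by omega : 0 < D.card)
      intro z
      by_contra hz
      have hcl : ∀ a ∈ {x : V | x ∉ D}, ∀ b, G.Adj a b → b ∈ {x : V | x ∉ D} := by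
        intro a ha b hab
        simp only [Set.mem_setOf_eq] at ha ⊢
        intro hbD
        have hadjall : ∀ d ∈ D, G.Adj a d := by
          intro d hd
          by_cases hdb : d = b
          · rwa [hdb]
          · have had : a ≠ d := fun h => ha (h ▸ hd)
            exact ((htw b d hbD hd (fun h => hdb h.symm)) a hab.ne had).mp hab.symm |>.symm
        have hsub : D ⊆ G.neighborFinset a := by
          intro d hd
          exact (SimpleGraph.mem_neighborFinset G a d).mpr (hadjall d hd)
        have : 3 ≤ G.degree a := le_trans h3 (Finset.card_le_card hsub)
        exact ha ((hmemD a).mpr this)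
      exact (closed_eq_univ hG (show z ∈ {x : V | x ∉ D} from hz) hcl p) hp
    have hcomp : ∀ a b : V, a ≠ b → G.Adj a b := by
      by_contra hc
      push_neg at hc
      obtain ⟨u, v, huv, hna⟩ := hc
      obtain ⟨x, hx⟩ := exists_adj hG (by omega) u
      have hxv : x ≠ v := fun h => hna (h ▸ hx)
      have hxu : x ≠ u := hx.ne'
      have hvx : G.Adj v x := (htw u v (hall u) (hall v) huv x hxu hxv).mp hx
      exact hna ((htw x u (hall x) (hall u) hxu v hvx.ne (Ne.symm huv)).mp hvx.symm)
    exact Or.inl (iso_top hcard hcomp)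
  · have hD2 : D.card = 0 ∨ D.card = 1 ∨ D.card = 2 := by omega
    rcases hD2 with hD | hD | hD
    · -- paths and cycles: only ≤ 4 vertices possible
      have memN : ∀ x y : V, y ∈ G.neighborFinset x ↔ G.Adj x y :=
        fun x y => SimpleGraph.mem_neighborFinset G x y
      have hdeg2 : ∀ x : V, G.degree x ≤ 2 := by
        intro x
        by_contra hh
        push_neg at hh
        have hxD : x ∈ D := (hmemD x).mpr (by omega)
        rw [Finset.card_eq_zero.mp hD] at hxD
        exact absurd hxD (Finset.notMem_empty x)
      by_cases hleaf : ∃ ℓ : V, G.degree ℓ = 1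
      · obtain ⟨ℓ, hl1⟩ := hleaf
        obtain ⟨s, hNl⟩ := Finset.card_eq_one.mp hl1
        have hadjls : G.Adj ℓ s := by
          rw [← memN, hNl]
          exact Finset.mem_singleton_self s
        have hsl : s ≠ ℓ := hadjls.ne'
        have hs2 : G.degree s = 2 := by
          have hd := hdeg2 s
          have hd' := hdeg1 s
          rcases (by omega : G.degree s = 1 ∨ G.degree s = 2) with h1 | h2
          · exfalso
            have hNs : G.neighborFinset s = {ℓ} :=
              singleton_of_card_one h1 ((memN s ℓ).mpr hadjls.symm)
            obtain ⟨w3, hw1, hw2⟩ := exists_one_other (hcard ▸ hn) ℓ s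
            exact leaf_leaf_absurd hG hNl hNs hw1 hw2
          · exact h2
        obtain ⟨t, htl, hNs⟩ := pair_other hs2 ((memN s ℓ).mpr hadjls.symm)
        have hadjst : G.Adj s t := by
          rw [← memN, hNs]
          simp
        have htne : t ≠ s := hadjst.ne'
        have hd := hdeg2 t
        have hd' := hdeg1 t
        rcases (by omega : G.degree t = 1 ∨ G.degree t = 2) with ht1 | ht2
        · -- P_3 : star with center s
          have hNt : G.neighborFinset t = {s} :=
            singleton_of_card_one ht1 ((memN t s).mpr hadjst.symm)
          have huniv : ∀ v : V, v = ℓ ∨ v = s ∨ v = t := by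
            have hcl : ∀ p ∈ {v : V | v = ℓ ∨ v = s ∨ v = t}, ∀ q, G.Adj p q →
                q ∈ {v : V | v = ℓ ∨ v = s ∨ v = t} := by
              intro p hp q hpq
              simp only [Set.mem_setOf_eq] at hp ⊢
              have hq : q ∈ G.neighborFinset p := (memN p q).mpr hpq
              rcases hp with rfl | rfl | rfl
              · rw [hNl, Finset.mem_singleton] at hq
                tauto
              · rw [hNs] at hq
                simp only [Finset.mem_insert, Finset.mem_singleton] at hq
                tauto
              · rw [hNt, Finset.mem_singleton] at hq
                tauto
            intro v
            exact closed_eq_univ hG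
              (show ℓ ∈ {v : V | v = ℓ ∨ v = s ∨ v = t} from Or.inl rfl) hcl v
          refine Or.inr (Or.inl (iso_star hn hcard (c := s) ?_))
          intro x y
          constructor
          · intro hxy
            refine ⟨hxy.ne, ?_⟩
            have hq : y ∈ G.neighborFinset x := (memN x y).mpr hxy
            rcases huniv x with rfl | rfl | rfl
            · rw [hNl, Finset.mem_singleton] at hq
              exact Or.inr hq
            · exact Or.inl rfl
            · rw [hNt, Finset.mem_singleton] at hq
              exact Or.inr hq
          · rintro ⟨hne, rfl | rfl⟩
            · rcases huniv y with rfl | rfl | rfl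
              · exact hadjls.symm
              · exact absurd rfl hne
              · exact hadjst
            · rcases huniv x with rfl | rfl | rfl
              · exact hadjls
              · exact absurd rfl hne
              · exact hadjst.symm
        · obtain ⟨r, hrs, hNt⟩ := pair_other ht2 ((memN t s).mpr hadjst.symm)
          have hadjtr : G.Adj t r := by
            rw [← memN, hNt]
            simp
          have hrt : r ≠ t := hadjtr.ne'
          have hrl : r ≠ ℓ := by
            intro h
            subst h
            have hm : t ∈ G.neighborFinset r := (memN r t).mpr hadjtr.symm
            rw [hNl, Finset.mem_singleton] at hm
            exact htne hm
          have hd2 := hdeg2 r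
          have hd2' := hdeg1 r
          rcases (by omega : G.degree r = 1 ∨ G.degree r = 2) with hr1 | hr2
          · -- P_4 : T-pattern with c = s, u = t, z = r
            have hNr : G.neighborFinset r = {t} :=
              singleton_of_card_one hr1 ((memN r t).mpr hadjtr.symm)
            have huniv : ∀ v : V, v = ℓ ∨ v = s ∨ v = t ∨ v = r := by
              have hcl : ∀ p ∈ {v : V | v = ℓ ∨ v = s ∨ v = t ∨ v = r}, ∀ q, G.Adj p q →
                  q ∈ {v : V | v = ℓ ∨ v = s ∨ v = t ∨ v = r} := by
                intro p hp q hpq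
                simp only [Set.mem_setOf_eq] at hp ⊢
                have hq : q ∈ G.neighborFinset p := (memN p q).mpr hpq
                rcases hp with rfl | rfl | rfl | rfl
                · rw [hNl, Finset.mem_singleton] at hq
                  tauto
                · rw [hNs] at hq
                  simp only [Finset.mem_insert, Finset.mem_singleton] at hq
                  tauto
                · rw [hNt] at hq
                  simp only [Finset.mem_insert, Finset.mem_singleton] at hq
                  tauto
                · rw [hNr, Finset.mem_singleton] at hq
                  tauto
              intro v
              exact closed_eq_univ hG
                (show ℓ ∈ {v : V | v = ℓ ∨ v = s ∨ v = t ∨ v = r} from Or.inl rfl) hcl v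
            refine Or.inr (Or.inr (Or.inr (Or.inr (Or.inl (iso_t hn hcard
              (c := s) (u := t) (z := r) (Ne.symm htne) (Ne.symm hrs)
              (fun h => hrt h.symm) ?_)))))
            intro x y
            constructor
            · intro hxy
              refine ⟨hxy.ne, ?_⟩
              have hq : y ∈ G.neighborFinset x := (memN x y).mpr hxy
              rcases huniv x with rfl | rfl | rfl | rfl
              · rw [hNl, Finset.mem_singleton] at hq
                subst hq
                exact Or.inr (Or.inr (Or.inl ⟨rfl, Ne.symm hrl⟩))
              · rw [hNs] at hq
                simp only [Finset.mem_insert, Finset.mem_singleton] at hq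
                rcases hq with rfl | rfl
                · exact Or.inl ⟨rfl, Ne.symm hrl⟩
                · exact Or.inl ⟨rfl, Ne.symm hrt⟩
              · rw [hNt] at hq
                simp only [Finset.mem_insert, Finset.mem_singleton] at hq
                rcases hq with rfl | rfl
                · exact Or.inr (Or.inr (Or.inl ⟨rfl, Ne.symm hrt⟩))
                · exact Or.inr (Or.inl ⟨rfl, rfl⟩)
              · rw [hNr, Finset.mem_singleton] at hq
                subst hq
                exact Or.inr (Or.inr (Or.inr ⟨rfl, rfl⟩))
            · rintro ⟨hne, hor⟩
              rcases hor with ⟨rfl, hbz⟩ | ⟨rfl, rfl⟩ | ⟨rfl, haz⟩ | ⟨rfl, rfl⟩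
              · rcases huniv y with rfl | rfl | rfl | rfl
                · exact hadjls.symm
                · exact absurd rfl hne
                · exact hadjst
                · exact absurd rfl hbz
              · exact hadjtr
              · rcases huniv x with rfl | rfl | rfl | rfl
                · exact hadjls
                · exact absurd rfl hne
                · exact hadjst.symm
                · exact absurd rfl haz
              · exact hadjtr.symm
          · -- longer path: contradiction via (∗) on the pair (s, r)
            exfalso
            have hnadjsr : ¬ G.Adj s r := by
              intro h
              have hm : r ∈ G.neighborFinset s := (memN s r).mpr h
              rw [hNs] at hm
              simp only [Finset.mem_insert, Finset.mem_singleton] at hm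
              rcases hm with h' | h'
              · exact hrl h'
              · exact hrt h'
            have htw := hst s r (fun h => hrs h.symm) (her2 s r hs2 hnadjsr)
              (her2 r s hr2 (fun h => hnadjsr h.symm))
            have hadjrl : G.Adj r ℓ :=
              (htw ℓ (Ne.symm hsl) (fun h => hrl h.symm)).mp hadjls.symm
            have hm : r ∈ G.neighborFinset ℓ := (memN ℓ r).mpr hadjrl.symm
            rw [hNl, Finset.mem_singleton] at hm
            exact hrs hm
      · -- all degrees exactly 2
        have hall2 : ∀ x : V, G.degree x = 2 := by
          intro x
          have h1 := hdeg1 x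
          have h2 := hdeg2 x
          push_neg at hleaf
          have h3' := hleaf x
          omega
        have hnV : Nonempty V := Fintype.card_pos_iff.mp (by omega)
        obtain ⟨u⟩ := hnV
        obtain ⟨a, ha⟩ := exists_adj hG (by omega) u
        obtain ⟨b, hba, hNu⟩ := pair_other (hall2 u) ((memN u a).mpr ha)
        have hadjub : G.Adj u b := by
          rw [← memN, hNu]
          simp
        have hau : a ≠ u := ha.ne'
        have hbu : b ≠ u := hadjub.ne'
        by_cases hab : G.Adj a b
        · -- K_3
          have hNa : G.neighborFinset a = {u, b} := by
            refine (Finset.eq_of_subset_of_card_le ?_ ?_).symm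
            · intro x hx
              simp only [Finset.mem_insert, Finset.mem_singleton] at hx
              rcases hx with rfl | rfl
              · exact (memN a x).mpr ha.symm
              · exact (memN a x).mpr hab
            · have hc2 : ({u, b} : Finset V).card = 2 := by
                rw [Finset.card_insert_of_notMem (by simp [hbu.symm]), Finset.card_singleton]
              have : (G.neighborFinset a).card = 2 := hall2 a
              omega
          have hNb : G.neighborFinset b = {u, a} := by
            refine (Finset.eq_of_subset_of_card_le ?_ ?_).symm
            · intro x hx
              simp only [Finset.mem_insert, Finset.mem_singleton] at hx
              rcases hx with rfl | rfl
              · exact (memN b x).mpr hadjub.symm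
              · exact (memN b x).mpr hab.symm
            · have hc2 : ({u, a} : Finset V).card = 2 := by
                rw [Finset.card_insert_of_notMem (by simp [hau.symm]), Finset.card_singleton]
              have : (G.neighborFinset b).card = 2 := hall2 b
              omega
          have huniv : ∀ v : V, v = u ∨ v = a ∨ v = b := by
            have hcl : ∀ p ∈ {v : V | v = u ∨ v = a ∨ v = b}, ∀ q, G.Adj p q →
                q ∈ {v : V | v = u ∨ v = a ∨ v = b} := by
              intro p hp q hpq
              simp only [Set.mem_setOf_eq] at hp ⊢
              have hq : q ∈ G.neighborFinset p := (memN p q).mpr hpq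
              rcases hp with rfl | rfl | rfl
              · rw [hNu] at hq
                simp only [Finset.mem_insert, Finset.mem_singleton] at hq
                tauto
              · rw [hNa] at hq
                simp only [Finset.mem_insert, Finset.mem_singleton] at hq
                tauto
              · rw [hNb] at hq
                simp only [Finset.mem_insert, Finset.mem_singleton] at hq
                tauto
            intro v
            exact closed_eq_univ hG
              (show u ∈ {v : V | v = u ∨ v = a ∨ v = b} from Or.inl rfl) hcl v
          refine Or.inl (iso_top hcard ?_)
          intro x y hxy
          rcases huniv x with rfl | rfl | rfl <;> rcases huniv y with rfl | rfl | rfl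
          · exact absurd rfl hxy
          · exact ha
          · exact hadjub
          · exact ha.symm
          · exact absurd rfl hxy
          · exact hab
          · exact hadjub.symm
          · exact hab.symm
          · exact absurd rfl hxy
        · -- C_4
          obtain ⟨w, hwu, hNa⟩ := pair_other (hall2 a) ((memN a u).mpr ha.symm)
          have hadjaw : G.Adj a w := by
            rw [← memN, hNa]
            simp
          have hwa : w ≠ a := hadjaw.ne'
          have hwb : w ≠ b := by
            intro h
            subst h
            exact hab hadjaw
          have htw := hst a b (fun h => hba h.symm) (her2 a b (hall2 a) hab)
            (her2 b a (hall2 b) (fun h => hab h.symm))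
          have hadjbw : G.Adj b w := (htw w hwa hwb).mp hadjaw
          have hNb : G.neighborFinset b = {u, w} := by
            refine (Finset.eq_of_subset_of_card_le ?_ ?_).symm
            · intro x hx
              simp only [Finset.mem_insert, Finset.mem_singleton] at hx
              rcases hx with rfl | rfl
              · exact (memN b x).mpr hadjub.symm
              · exact (memN b x).mpr hadjbw
            · have hc2 : ({u, w} : Finset V).card = 2 := by
                rw [Finset.card_insert_of_notMem (by simp [hwu.symm]), Finset.card_singleton]
              have : (G.neighborFinset b).card = 2 := hall2 b
              omega
          have hNw : G.neighborFinset w = {a, b} := by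
            refine (Finset.eq_of_subset_of_card_le ?_ ?_).symm
            · intro x hx
              simp only [Finset.mem_insert, Finset.mem_singleton] at hx
              rcases hx with rfl | rfl
              · exact (memN w x).mpr hadjaw.symm
              · exact (memN w x).mpr hadjbw.symm
            · have hc2 : ({a, b} : Finset V).card = 2 := by
                have hab' : a ≠ b := fun h => hba h.symm
                rw [Finset.card_insert_of_notMem (by simp [hab']), Finset.card_singleton]
              have : (G.neighborFinset w).card = 2 := hall2 w
              omega
          have huniv : ∀ v : V, v = u ∨ v = a ∨ v = b ∨ v = w := by
            have hcl : ∀ p ∈ {v : V | v = u ∨ v = a ∨ v = b ∨ v = w}, ∀ q, G.Adj p q →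
                q ∈ {v : V | v = u ∨ v = a ∨ v = b ∨ v = w} := by
              intro p hp q hpq
              simp only [Set.mem_setOf_eq] at hp ⊢
              have hq : q ∈ G.neighborFinset p := (memN p q).mpr hpq
              rcases hp with rfl | rfl | rfl | rfl
              · rw [hNu] at hq
                simp only [Finset.mem_insert, Finset.mem_singleton] at hq
                tauto
              · rw [hNa] at hq
                simp only [Finset.mem_insert, Finset.mem_singleton] at hq
                tauto
              · rw [hNb] at hq
                simp only [Finset.mem_insert, Finset.mem_singleton] at hq
                tauto
              · rw [hNw] at hq
                simp only [Finset.mem_insert, Finset.mem_singleton] at hq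
                tauto
            intro v
            exact closed_eq_univ hG
              (show u ∈ {v : V | v = u ∨ v = a ∨ v = b ∨ v = w} from Or.inl rfl) hcl v
          have hcr : ∀ x y : V, (x = u ∨ x = w) → ¬(y = u ∨ y = w) → G.Adj x y := by
            intro x y hx hy
            rcases huniv y with rfl | rfl | rfl | rfl
            · exact absurd (Or.inl rfl) hy
            · rcases hx with rfl | rfl
              · exact ha
              · exact hadjaw.symm
            · rcases hx with rfl | rfl
              · exact hadjub
              · exact hadjbw.symm
            · exact absurd (Or.inr rfl) hy
          refine Or.inr (Or.inr (Or.inl (iso_compBip hn hcard (p := u) (q := w)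
            (Ne.symm hwu) ?_)))
          intro x y
          constructor
          · intro hxy
            have hq : y ∈ G.neighborFinset x := (memN x y).mpr hxy
            rcases huniv x with rfl | rfl | rfl | rfl
            · rw [hNu] at hq
              simp only [Finset.mem_insert, Finset.mem_singleton] at hq
              refine Or.inl ⟨Or.inl rfl, ?_⟩
              rcases hq with rfl | rfl
              · rintro (h | h)
                · exact hau h
                · exact hwa h.symm
              · rintro (h | h)
                · exact hbu h
                · exact hwb h.symm
            · rw [hNa] at hq
              simp only [Finset.mem_insert, Finset.mem_singleton] at hq
              refine Or.inr ⟨?_, ?_⟩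
              · rcases hq with rfl | rfl
                · exact Or.inl rfl
                · exact Or.inr rfl
              · rintro (h | h)
                · exact hau h
                · exact hwa h.symm
            · rw [hNb] at hq
              simp only [Finset.mem_insert, Finset.mem_singleton] at hq
              refine Or.inr ⟨?_, ?_⟩
              · rcases hq with rfl | rfl
                · exact Or.inl rfl
                · exact Or.inr rfl
              · rintro (h | h)
                · exact hbu h
                · exact hwb h.symm
            · rw [hNw] at hq
              simp only [Finset.mem_insert, Finset.mem_singleton] at hq
              refine Or.inl ⟨Or.inr rfl, ?_⟩
              rcases hq with rfl | rfl
              · rintro (h | h)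
                · exact hau h
                · exact hwa h.symm
              · rintro (h | h)
                · exact hbu h
                · exact hwb h.symm
          · rintro (⟨hx, hy⟩ | ⟨hy, hx⟩)
            · exact hcr x y hx hy
            · exact (hcr y x hy hx).symm
    · -- star, T_n, U_n
      have memN : ∀ x y : V, y ∈ G.neighborFinset x ↔ G.Adj x y :=
        fun x y => SimpleGraph.mem_neighborFinset G x y
      obtain ⟨c, hDeq⟩ := Finset.card_eq_one.mp hD
      have hc3 : 3 ≤ G.degree c := (hmemD c).mp (by rw [hDeq]; simp)
      have hdeg2 : ∀ x : V, x ≠ c → G.degree x ≤ 2 := by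
        intro x h1
        by_contra hh
        push_neg at hh
        have hxD : x ∈ D := (hmemD x).mpr (by omega)
        rw [hDeq, Finset.mem_singleton] at hxD
        exact h1 hxD
      have hclaim1 : ∀ u : V, u ≠ c → G.degree u = 2 → G.Adj c u := by
        intro u huc hu2
        by_contra hnadj
        have hnadj' : ¬ G.Adj u c := fun h => hnadj h.symm
        have htw := hst u c huc (her2 u c hu2 hnadj') (her3 c u hc3)
        have hsub : G.neighborFinset c ⊆ G.neighborFinset u := by
          intro x hx
          rw [memN] at hx
          rw [memN]
          have hxc : x ≠ c := hx.ne'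
          have hxu : x ≠ u := fun h => hnadj (h ▸ hx)
          exact (htw x hxu hxc).mpr hx
        have hcc := Finset.card_le_card hsub
        have hd1 : G.degree c = (G.neighborFinset c).card := rfl
        have hd2 : G.degree u = (G.neighborFinset u).card := rfl
        omega
      have hother : ∀ u : V, u ≠ c → G.degree u = 2 →
          ∃ z, z ≠ c ∧ z ≠ u ∧ G.neighborFinset u = {c, z} := by
        intro u huc hu2
        have hcm : c ∈ G.neighborFinset u := (memN u c).mpr (hclaim1 u huc hu2).symm
        obtain ⟨z, hz1, hz2⟩ := pair_other hu2 hcm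
        have hzmem : z ∈ G.neighborFinset u := by rw [hz2]; simp
        exact ⟨z, hz1, ((memN u z).mp hzmem).ne', hz2⟩
      by_cases hA : ∀ x : V, x ≠ c → G.degree x ≠ 2
      · -- star
        have hdeg1' : ∀ x : V, x ≠ c → G.degree x = 1 := by
          intro x hx
          have h1 := hdeg2 x hx
          have h2 := hdeg1 x
          have h3' := hA x hx
          omega
        have hNsing : ∀ x : V, x ≠ c → ∃ s0, G.neighborFinset x = {s0} :=
          fun x hx => Finset.card_eq_one.mp (hdeg1' x hx)
        have hadjc : ∀ x : V, x ≠ c → G.Adj c x := by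
          intro x hx
          obtain ⟨s0, hs0⟩ := hNsing x hx
          have hxs0 : G.Adj x s0 := by
            rw [← memN, hs0]
            exact Finset.mem_singleton_self s0
          by_cases hs0c : s0 = c
          · exact (hs0c ▸ hxs0).symm
          · exfalso
            obtain ⟨t, ht⟩ := hNsing s0 hs0c
            have hts : t = x := by
              have hxm : x ∈ G.neighborFinset s0 := (memN s0 x).mpr hxs0.symm
              rw [ht, Finset.mem_singleton] at hxm
              exact hxm.symm
            exact leaf_leaf_absurd hG hs0 (hts ▸ ht) (Ne.symm hx) (Ne.symm hs0c)
        refine Or.inr (Or.inl (iso_star hn hcard (c := c) ?_))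
        intro a b
        constructor
        · intro hab
          refine ⟨hab.ne, ?_⟩
          by_contra hh
          push_neg at hh
          obtain ⟨h1, h2⟩ := hh
          obtain ⟨s0, hs0⟩ := hNsing a h1
          have hs0c : s0 = c := by
            have hcm : c ∈ G.neighborFinset a := (memN a c).mpr (hadjc a h1).symm
            rw [hs0, Finset.mem_singleton] at hcm
            exact hcm.symm
          have hb : b ∈ G.neighborFinset a := (memN a b).mpr hab
          rw [hs0, hs0c, Finset.mem_singleton] at hb
          exact h2 hb
        · rintro ⟨hne, rfl | rfl⟩
          · exact hadjc b (Ne.symm hne)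
          · exact (hadjc a hne).symm
      · push_neg at hA
        obtain ⟨u, huc, hu2⟩ := hA
        obtain ⟨z, hzc, hzu, hNu⟩ := hother u huc hu2
        have hadjuz : G.Adj u z := by
          rw [← memN, hNu]
          simp
        have hadjcu : G.Adj c u := hclaim1 u huc hu2
        by_cases hz2 : G.degree z = 2
        · -- U_n: triangle c, u, z plus leaves at c
          obtain ⟨w, hwc, hwz, hNz0⟩ := hother z hzc hz2
          have hwu : w = u := by
            have hum : u ∈ G.neighborFinset z := (memN z u).mpr hadjuz.symm
            rw [hNz0] at hum
            simp only [Finset.mem_insert, Finset.mem_singleton] at hum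
            rcases hum with h | h
            · exact absurd h huc
            · exact h.symm
          rw [hwu] at hNz0
          have hadjcz : G.Adj c z := hclaim1 z hzc hz2
          have claimA : ∀ x, x ≠ c → x ≠ u → x ≠ z → G.degree x ≠ 2 := by
            intro x hxc hxu hxz hx2
            have hnadj : ¬ G.Adj u x := by
              intro h
              have hxm : x ∈ G.neighborFinset u := (memN u x).mpr h
              rw [hNu] at hxm
              simp only [Finset.mem_insert, Finset.mem_singleton] at hxm
              tauto
            have hnadj' : ¬ G.Adj x u := fun h => hnadj h.symm
            have htw := hst u x (fun h => hxu h.symm) (her2 u x hu2 hnadj)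
              (her2 x u hx2 hnadj')
            have hadjxz : G.Adj x z := (htw z hzu (fun h => hxz h.symm)).mp hadjuz
            have hxm : x ∈ G.neighborFinset z := (memN z x).mpr hadjxz.symm
            rw [hNz0] at hxm
            simp only [Finset.mem_insert, Finset.mem_singleton] at hxm
            tauto
          have hleafN : ∀ x, x ≠ c → x ≠ u → x ≠ z → G.neighborFinset x = {c} := by
            intro x hxc hxu hxz
            have hx1 : G.degree x = 1 := by
              have h1 := hdeg2 x hxc
              have h2 := hdeg1 x
              have h3' := claimA x hxc hxu hxz
              omega
            obtain ⟨s0, hs0⟩ := Finset.card_eq_one.mp hx1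
            have hxs0 : G.Adj x s0 := by
              rw [← memN, hs0]
              exact Finset.mem_singleton_self s0
            have hs0c : s0 = c := by
              by_contra hs0c
              have hs0u : s0 ≠ u := by
                intro h
                subst h
                have hxm : x ∈ G.neighborFinset s0 := (memN s0 x).mpr hxs0.symm
                rw [hNu] at hxm
                simp only [Finset.mem_insert, Finset.mem_singleton] at hxm
                tauto
              have hs0z : s0 ≠ z := by
                intro h
                subst h
                have hxm : x ∈ G.neighborFinset s0 := (memN s0 x).mpr hxs0.symm
                rw [hNz0] at hxm
                simp only [Finset.mem_insert, Finset.mem_singleton] at hxm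
                tauto
              have hs01 : G.degree s0 = 1 := by
                have h1 := hdeg2 s0 hs0c
                have h2 := hdeg1 s0
                have h3' := claimA s0 hs0c hs0u hs0z
                omega
              obtain ⟨t, ht⟩ := Finset.card_eq_one.mp hs01
              have hts : t = x := by
                have hxm : x ∈ G.neighborFinset s0 := (memN s0 x).mpr hxs0.symm
                rw [ht, Finset.mem_singleton] at hxm
                exact hxm.symm
              exact leaf_leaf_absurd hG hs0 (hts ▸ ht) (Ne.symm hxc) (Ne.symm hs0c)
            rw [hs0, hs0c]
          have hcall : ∀ x, x ≠ c → G.Adj c x := by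
            intro x hxc
            by_cases hxu : x = u
            · exact hxu ▸ hadjcu
            · by_cases hxz : x = z
              · exact hxz ▸ hadjcz
              · have hx := hleafN x hxc hxu hxz
                have : G.Adj x c := by
                  rw [← memN, hx]
                  exact Finset.mem_singleton_self c
                exact this.symm
          refine Or.inr (Or.inr (Or.inr (Or.inr (Or.inr (iso_u hn hcard
            (Ne.symm huc) (Ne.symm hzc) (fun h => hzu h.symm) ?_)))))
          intro a b
          constructor
          · intro hab
            refine ⟨hab.ne, ?_⟩
            by_cases hac : a = c
            · exact Or.inl hac
            · by_cases hbc : b = c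
              · exact Or.inr (Or.inl hbc)
              · by_cases hau : a = u
                · subst hau
                  have hb : b ∈ G.neighborFinset a := (memN a b).mpr hab
                  rw [hNu] at hb
                  simp only [Finset.mem_insert, Finset.mem_singleton] at hb
                  rcases hb with rfl | rfl
                  · exact absurd rfl hbc
                  · exact Or.inr (Or.inr (Or.inl ⟨rfl, rfl⟩))
                · by_cases haz : a = z
                  · subst haz
                    have hb : b ∈ G.neighborFinset a := (memN a b).mpr hab
                    rw [hNz0] at hb
                    simp only [Finset.mem_insert, Finset.mem_singleton] at hb
                    rcases hb with rfl | rfl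
                    · exact absurd rfl hbc
                    · exact Or.inr (Or.inr (Or.inr ⟨rfl, rfl⟩))
                  · exfalso
                    have hx := hleafN a hac hau haz
                    have hb : b ∈ G.neighborFinset a := (memN a b).mpr hab
                    rw [hx, Finset.mem_singleton] at hb
                    exact hbc hb
          · rintro ⟨hne, hor⟩
            rcases hor with rfl | rfl | ⟨rfl, rfl⟩ | ⟨rfl, rfl⟩
            · exact hcall b (Ne.symm hne)
            · exact (hcall a hne).symm
            · exact hadjuz
            · exact hadjuz.symm
        · -- T_n: path c - u - z plus leaves at c
          have hz1 : G.degree z = 1 := by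
            have h1 := hdeg2 z hzc
            have h2 := hdeg1 z
            omega
          have hNz0 : G.neighborFinset z = {u} :=
            singleton_of_card_one hz1 ((memN z u).mpr hadjuz.symm)
          have hnadjcz : ¬ G.Adj c z := by
            intro h
            have hcm : c ∈ G.neighborFinset z := (memN z c).mpr h.symm
            rw [hNz0, Finset.mem_singleton] at hcm
            exact huc hcm.symm
          have claimA : ∀ x, x ≠ c → x ≠ u → x ≠ z → G.degree x ≠ 2 := by
            intro x hxc hxu hxz hx2
            have hnadj : ¬ G.Adj u x := by
              intro h
              have hxm : x ∈ G.neighborFinset u := (memN u x).mpr h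
              rw [hNu] at hxm
              simp only [Finset.mem_insert, Finset.mem_singleton] at hxm
              tauto
            have hnadj' : ¬ G.Adj x u := fun h => hnadj h.symm
            have htw := hst u x (fun h => hxu h.symm) (her2 u x hu2 hnadj)
              (her2 x u hx2 hnadj')
            have hadjxz : G.Adj x z := (htw z hzu (fun h => hxz h.symm)).mp hadjuz
            have hxm : x ∈ G.neighborFinset z := (memN z x).mpr hadjxz.symm
            rw [hNz0, Finset.mem_singleton] at hxm
            exact hxu hxm
          have hleafN : ∀ x, x ≠ c → x ≠ u → x ≠ z → G.neighborFinset x = {c} := by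
            intro x hxc hxu hxz
            have hx1 : G.degree x = 1 := by
              have h1 := hdeg2 x hxc
              have h2 := hdeg1 x
              have h3' := claimA x hxc hxu hxz
              omega
            obtain ⟨s0, hs0⟩ := Finset.card_eq_one.mp hx1
            have hxs0 : G.Adj x s0 := by
              rw [← memN, hs0]
              exact Finset.mem_singleton_self s0
            have hs0c : s0 = c := by
              by_contra hs0c
              have hs0u : s0 ≠ u := by
                intro h
                subst h
                have hxm : x ∈ G.neighborFinset s0 := (memN s0 x).mpr hxs0.symm
                rw [hNu] at hxm
                simp only [Finset.mem_insert, Finset.mem_singleton] at hxm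
                tauto
              have hs0z : s0 ≠ z := by
                intro h
                subst h
                have hxm : x ∈ G.neighborFinset s0 := (memN s0 x).mpr hxs0.symm
                rw [hNz0, Finset.mem_singleton] at hxm
                exact hxu hxm
              have hs01 : G.degree s0 = 1 := by
                have h1 := hdeg2 s0 hs0c
                have h2 := hdeg1 s0
                have h3' := claimA s0 hs0c hs0u hs0z
                omega
              obtain ⟨t, ht⟩ := Finset.card_eq_one.mp hs01
              have hts : t = x := by
                have hxm : x ∈ G.neighborFinset s0 := (memN s0 x).mpr hxs0.symm
                rw [ht, Finset.mem_singleton] at hxm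
                exact hxm.symm
              exact leaf_leaf_absurd hG hs0 (hts ▸ ht) (Ne.symm hxc) (Ne.symm hs0c)
            rw [hs0, hs0c]
          have hcall : ∀ x, x ≠ c → x ≠ z → G.Adj c x := by
            intro x hxc hxz
            by_cases hxu : x = u
            · exact hxu ▸ hadjcu
            · have hx := hleafN x hxc hxu hxz
              have : G.Adj x c := by
                rw [← memN, hx]
                exact Finset.mem_singleton_self c
              exact this.symm
          refine Or.inr (Or.inr (Or.inr (Or.inr (Or.inl (iso_t hn hcard
            (Ne.symm huc) (Ne.symm hzc) (fun h => hzu h.symm) ?_)))))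
          intro a b
          constructor
          · intro hab
            refine ⟨hab.ne, ?_⟩
            by_cases hac : a = c
            · subst hac
              refine Or.inl ⟨rfl, ?_⟩
              intro hbz
              subst hbz
              exact hnadjcz hab
            · by_cases hbc : b = c
              · subst hbc
                refine Or.inr (Or.inr (Or.inl ⟨rfl, ?_⟩))
                intro haz
                subst haz
                exact hnadjcz hab.symm
              · by_cases hau : a = u
                · subst hau
                  have hb : b ∈ G.neighborFinset a := (memN a b).mpr hab
                  rw [hNu] at hb
                  simp only [Finset.mem_insert, Finset.mem_singleton] at hb
                  rcases hb with rfl | rfl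
                  · exact absurd rfl hbc
                  · exact Or.inr (Or.inl ⟨rfl, rfl⟩)
                · by_cases haz : a = z
                  · subst haz
                    have hb : b ∈ G.neighborFinset a := (memN a b).mpr hab
                    rw [hNz0, Finset.mem_singleton] at hb
                    exact Or.inr (Or.inr (Or.inr ⟨hb, rfl⟩))
                  · exfalso
                    have hx := hleafN a hac hau haz
                    have hb : b ∈ G.neighborFinset a := (memN a b).mpr hab
                    rw [hx, Finset.mem_singleton] at hb
                    exact hbc hb
          · rintro ⟨hne, hor⟩
            rcases hor with ⟨rfl, hbz⟩ | ⟨rfl, rfl⟩ | ⟨rfl, haz⟩ | ⟨rfl, rfl⟩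
            · exact hcall b (Ne.symm hne) hbz
            · exact hadjuz
            · exact (hcall a hne haz).symm
            · exact hadjuz.symm
    · -- S_n, K_{2,n-2}
      obtain ⟨p, q, hpq, hDeq⟩ := Finset.card_eq_two.mp hD
      have hp3 : 3 ≤ G.degree p := (hmemD p).mp (by rw [hDeq]; simp)
      have hq3 : 3 ≤ G.degree q := (hmemD q).mp (by rw [hDeq]; simp)
      have htwpq : ∀ x, x ≠ p → x ≠ q → (G.Adj p x ↔ G.Adj q x) :=
        hst p q hpq (her3 p q hp3) (her3 q p hq3)
      have hdeg2 : ∀ x : V, x ≠ p → x ≠ q → G.degree x ≤ 2 := by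
        intro x h1 h2
        by_contra hh
        push_neg at hh
        have hxD : x ∈ D := (hmemD x).mpr (by omega)
        rw [hDeq] at hxD
        simp only [Finset.mem_insert, Finset.mem_singleton] at hxD
        tauto
      have hfull : ∀ x, G.Adj p x → G.Adj q x → ∀ y, G.Adj x y → y = p ∨ y = q := by
        intro x hpx hqx y hxy
        by_contra hy
        push_neg at hy
        have h3' : 3 ≤ G.degree x :=
          three_le_of_mem ((SimpleGraph.mem_neighborFinset G x p).mpr hpx.symm)
            ((SimpleGraph.mem_neighborFinset G x q).mpr hqx.symm)
            ((SimpleGraph.mem_neighborFinset G x y).mpr hxy) hpq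
            (Ne.symm hy.1) (Ne.symm hy.2)
        exact absurd h3' (by have := hdeg2 x hpx.ne' hqx.ne'; omega)
      have hs : ∀ v : V, v = p ∨ v = q ∨ (G.Adj p v ∧ G.Adj q v) := by
        have hcl : ∀ a ∈ {x : V | x = p ∨ x = q ∨ (G.Adj p x ∧ G.Adj q x)}, ∀ b, G.Adj a b →
            b ∈ {x : V | x = p ∨ x = q ∨ (G.Adj p x ∧ G.Adj q x)} := by
          intro a ha b hab
          simp only [Set.mem_setOf_eq] at ha ⊢
          rcases ha with rfl | rfl | ⟨h1, h2⟩
          · by_cases hbq : b = q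
            · exact Or.inr (Or.inl hbq)
            · exact Or.inr (Or.inr ⟨hab, (htwpq b hab.ne' hbq).mp hab⟩)
          · by_cases hbp : b = p
            · exact Or.inl hbp
            · exact Or.inr (Or.inr ⟨(htwpq b hbp hab.ne').mpr hab, hab⟩)
          · rcases hfull a h1 h2 b hab with rfl | rfl
            · exact Or.inl rfl
            · exact Or.inr (Or.inl rfl)
        exact fun v => closed_eq_univ hG
          (show p ∈ {x : V | x = p ∨ x = q ∨ (G.Adj p x ∧ G.Adj q x)} from Or.inl rfl) hcl v
      by_cases hadj : G.Adj p q
      · refine Or.inr (Or.inr (Or.inr (Or.inl (iso_s hn hcard hpq ?_))))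
        intro a b
        constructor
        · intro hab
          refine ⟨hab.ne, ?_⟩
          by_contra hh
          push_neg at hh
          obtain ⟨h1, h2, h3', h4⟩ := hh
          rcases hs a with rfl | rfl | ⟨ha1, ha2⟩
          · exact h1 rfl
          · exact h2 rfl
          · rcases hfull a ha1 ha2 b hab with rfl | rfl
            · exact h3' rfl
            · exact h4 rfl
        · rintro ⟨hne, hor⟩
          have hpall : ∀ x, x ≠ p → G.Adj p x := by
            intro x hx
            rcases hs x with rfl | rfl | ⟨h1, -⟩
            · exact absurd rfl hx
            · exact hadj
            · exact h1
          have hqall : ∀ x, x ≠ q → G.Adj q x := by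
            intro x hx
            rcases hs x with rfl | rfl | ⟨-, h2⟩
            · exact hadj.symm
            · exact absurd rfl hx
            · exact h2
          rcases hor with rfl | rfl | rfl | rfl
          · exact hpall b (Ne.symm hne)
          · exact hqall b (Ne.symm hne)
          · exact (hpall a hne).symm
          · exact (hqall a hne).symm
      · refine Or.inr (Or.inr (Or.inl (iso_compBip hn hcard hpq ?_)))
        intro a b
        constructor
        · intro hab
          by_cases ha' : a = p ∨ a = q
          · left
            refine ⟨ha', ?_⟩
            rintro (rfl | rfl)
            · rcases ha' with rfl | rfl
              · exact G.irrefl hab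
              · exact hadj hab.symm
            · rcases ha' with rfl | rfl
              · exact hadj hab
              · exact G.irrefl hab
          · right
            refine ⟨?_, ha'⟩
            rcases hs a with rfl | rfl | ⟨h1, h2⟩
            · exact absurd (Or.inl rfl) ha'
            · exact absurd (Or.inr rfl) ha'
            · rcases hfull a h1 h2 b hab with rfl | rfl
              · exact Or.inl rfl
              · exact Or.inr rfl
        · intro hh
          have hadj' : ∀ x y : V, (x = p ∨ x = q) → ¬(y = p ∨ y = q) → G.Adj x y := by
            intro x y hx hy
            rcases hs y with rfl | rfl | ⟨h1, h2⟩
            · exact absurd (Or.inl rfl) hy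
            · exact absurd (Or.inr rfl) hy
            · rcases hx with rfl | rfl
              · exact h1
              · exact h2
          rcases hh with ⟨h1, h2⟩ | ⟨h1, h2⟩
          · exact hadj' a b h1 h2
          · exact (hadj' b a h1 h2).symm
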